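/- arXiv:2203.02693 — 3 statements merged into one kernel-verified Lean document; each statement's English description precedes it below -/
import Mathlib

section
/- Let n ≥ 3 be divisible by 3 and let J := {0, 1, …, n/3 + 1} ∪ {n/3 + 2i : i ∈ {1, …, n/3}} ⊆ {0, 1, …, n}. Then there exists a subset J'' ⊆ J with |J''| = n/3 + 1, 0 ∈ J'', n ∈ J'', and mei(J'') ≤ 4. (Second claim of Lemma bigMEI2: from the combined parent and offspring population R with these first objective values, one can select a population of size N = n/3 + 1 containing both extremes with maximal empty interval at most 4, in contrast to the NSGA-II selection, which leaves an empty interval of length n/3 + 2.) -/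
/-- For `a ∈ J`, the distance from `a` to the next larger element of `J`
(`0` if `a` is the maximum of `J`). -/
def gapAfter (J : Finset ℕ) (a : ℕ) : ℕ :=
  (WithTop.untopD a (J.filter (fun b => a < b)).min) - a

/-- The maximal empty interval size of `J`: listing the elements of `J` in increasing
order as `j_1 < j_2 < … < j_m`, this is `max_{1 ≤ a ≤ m-1} (j_{a+1} - j_a)`. -/
def mei (J : Finset ℕ) : ℕ := J.sup (fun a => gapAfter J a)

/-- Selection function: gaps of `2` up to `2*m`, then one gap `c`, then gaps of `4`. -/
def bf (m c i : ℕ) : ℕ := if i ≤ m then 2 * i else 2 * m + c + 4 * (i - m - 1)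

lemma bf_step (m c i : ℕ) (hc3 : 3 ≤ c) (hc4 : c ≤ 4) :
    bf m c i < bf m c (i + 1) ∧ bf m c (i + 1) ≤ bf m c i + 4 := by
  unfold bf
  rcases le_or_gt (i + 1) m with h | h
  · rw [if_pos (by omega), if_pos h]; omega
  · rcases le_or_gt i m with h2 | h2
    · have hi : i = m := by omega
      subst hi
      rw [if_pos le_rfl, if_neg (by omega)]
      omega
    · rw [if_neg (by omega), if_neg (by omega)]; omega

lemma bf_mono (m c : ℕ) (hc3 : 3 ≤ c) (hc4 : c ≤ 4) : StrictMono (bf m c) :=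
  strictMono_nat_of_lt_succ fun i => (bf_step m c i hc3 hc4).1

lemma gapAfter_le (J : Finset ℕ) (a b : ℕ) (hb : b ∈ J) (hab : a < b) (h4 : b ≤ a + 4) :
    gapAfter J a ≤ 4 := by
  unfold gapAfter
  have hbF : b ∈ J.filter (fun x => a < x) := Finset.mem_filter.mpr ⟨hb, hab⟩
  have hmin := Finset.min_le hbF
  obtain ⟨v, hv⟩ := Finset.min_of_mem hbF
  rw [hv]
  rw [hv] at hmin
  have hvb : v ≤ b := by exact_mod_cast hmin
  simp only [WithTop.untopD_coe]
  omega

lemma gapAfter_top (J : Finset ℕ) (a : ℕ) (h : ∀ b ∈ J, b ≤ a) : gapAfter J a = 0 := by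
  unfold gapAfter
  have : J.filter (fun b => a < b) = ∅ := by
    apply Finset.filter_eq_empty_iff.mpr
    intro b hb
    exact not_lt.mpr (h b hb)
  rw [this]
  simp

/-- Second claim of Lemma `bigMEI2`: for `3 ∣ n`, from the set
`J = {0,…,n/3+1} ∪ {n/3+2i : i ∈ {1,…,n/3}} ⊆ {0,…,n}` one can select a subset
`J''` of size `n/3 + 1` containing `0` and `n` with `mei(J'') ≤ 4`. -/
theorem stmt10 (n : ℕ) (hn : 3 ≤ n) (h3 : 3 ∣ n) :
    (∀ j ∈ Finset.range (n / 3 + 2) ∪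
        (Finset.Icc 1 (n / 3)).image (fun i => n / 3 + 2 * i), j ≤ n) ∧
    ∃ J'' : Finset ℕ,
      J'' ⊆ Finset.range (n / 3 + 2) ∪
        (Finset.Icc 1 (n / 3)).image (fun i => n / 3 + 2 * i) ∧
      J''.card = n / 3 + 1 ∧ 0 ∈ J'' ∧ n ∈ J'' ∧ mei J'' ≤ 4 := by
  set k := n / 3 with hk
  have hn3 : n = 3 * k := by
    rw [hk]; exact (Nat.mul_div_cancel' h3).symm
  have hk1 : 1 ≤ k := by omega
  constructor
  · intro j hj
    rcases Finset.mem_union.mp hj with h | h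
    · have := Finset.mem_range.mp h; omega
    · obtain ⟨i, hi, rfl⟩ := Finset.mem_image.mp h
      have := Finset.mem_Icc.mp hi
      omega
  · set m := k / 2 with hm
    set c := 4 - k % 2 with hc
    have hr := Nat.div_add_mod k 2
    have hr2 : k % 2 = 0 ∨ k % 2 = 1 := by omega
    have hc3 : 3 ≤ c := by omega
    have hc4 : c ≤ 4 := by omega
    have hmk : m < k := by omega
    set f := bf m c with hf
    have hmono : StrictMono f := bf_mono m c hc3 hc4
    -- f k = n
    have hfk : f k = n := by
      rw [hf]; unfold bf
      rw [if_neg (by omega)]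
      omega
    have hf0 : f 0 = 0 := by
      rw [hf]; unfold bf; rw [if_pos (Nat.zero_le m)]
    -- membership
    have hmem : ∀ i ≤ k, f i ∈ Finset.range (k + 2) ∪
        (Finset.Icc 1 k).image (fun i => k + 2 * i) := by
      intro i hi
      rcases le_or_gt i m with h | h
      · apply Finset.mem_union_left
        apply Finset.mem_range.mpr
        rw [hf]; unfold bf; rw [if_pos h]
        omega
      · apply Finset.mem_union_right
        apply Finset.mem_image.mpr
        refine ⟨2 * (i - m) - k % 2, Finset.mem_Icc.mpr ⟨by omega, by omega⟩, ?_⟩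
        rw [hf]; unfold bf; rw [if_neg (by omega)]
        omega
    refine ⟨(Finset.range (k + 1)).image f, ?_, ?_, ?_, ?_, ?_⟩
    · intro x hx
      obtain ⟨i, hi, rfl⟩ := Finset.mem_image.mp hx
      exact hmem i (by have := Finset.mem_range.mp hi; omega)
    · rw [Finset.card_image_of_injective _ hmono.injective, Finset.card_range]
    · refine Finset.mem_image.mpr ⟨0, Finset.mem_range.mpr (by omega), hf0⟩
    · exact Finset.mem_image.mpr ⟨k, Finset.mem_range.mpr (by omega), hfk⟩
    · apply Finset.sup_le
      intro a ha
      obtain ⟨i, hi, rfl⟩ := Finset.mem_image.mp ha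
      have hik : i ≤ k := by have := Finset.mem_range.mp hi; omega
      rcases lt_or_eq_of_le hik with h | h
      · have hstep := bf_step m c i hc3 hc4
        exact gapAfter_le _ (f i) (f (i + 1))
          (Finset.mem_image.mpr ⟨i + 1, Finset.mem_range.mpr (by omega), rfl⟩)
          hstep.1 hstep.2
      · have : gapAfter ((Finset.range (k + 1)).image f) (f i) = 0 := by
          apply gapAfter_top
          intro b hb
          obtain ⟨j, hj, rfl⟩ := Finset.mem_image.mp hb
          have : j ≤ k := by have := Finset.mem_range.mp hj; omega
          subst h
          exact hmono.monotone this
        omega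
end

section
/- Let n ≥ 7 be odd and N = (n+1)/2. For every k ∈ {1, …, N}, the number of N-element subsets T of {1, …, n−1} such that mei(S_T) ≥ k, where S_T := {0, n} ∪ ({1,…,n−1} \ T), is at most n·(2/3)^k · C(n−1, N). Equivalently, if T is chosen uniformly at random among all N-element subsets of {1,…,n−1}, then Pr[mei(S_T) ≥ k] ≤ n·(2/3)^k. (Upper tail bound of Lemma bigMEI.) -/
/-- The set of first objective values surviving when the removed set is `T`:
`S_T = {0, n} ∪ ({1,…,n-1} \ T)`. -/
def STn (n : ℕ) (T : Finset ℕ) : Finset ℕ :=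
  insert 0 (insert n ((Finset.Icc 1 (n - 1)) \ T))

lemma extract (n k : ℕ) (hk1 : 1 ≤ k) (T : Finset ℕ) (hT : T ⊆ Finset.Icc 1 (n-1))
    (hmei : k ≤ mei (STn n T)) :
    ∃ i ≤ n - k, i ∉ T ∧ Finset.Icc (i+1) (i+k-1) ⊆ T := by
  rw [mei, Finset.le_sup_iff (by simp only [Nat.bot_eq_zero]; omega)] at hmei
  obtain ⟨a, haJ, hak⟩ := hmei
  set J := STn n T with hJ
  rcases hmin : (J.filter (fun b => a < b)).min with _ | b
  · rw [gapAfter, hmin] at hak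
    rw [show (WithTop.untopD a none) = a from rfl] at hak
    omega
  · have hbF : b ∈ J.filter (fun b => a < b) := Finset.mem_of_min hmin
    have hbJ : b ∈ J := (Finset.mem_filter.mp hbF).1
    have hab : a < b := (Finset.mem_filter.mp hbF).2
    have hgap : k ≤ b - a := by
      rw [gapAfter, hmin] at hak
      exact hak
    have hJle : ∀ x ∈ J, x ≤ n := by
      intro x hx
      simp only [hJ, STn, Finset.mem_insert, Finset.mem_sdiff, Finset.mem_Icc] at hx
      rcases hx with h|h|h <;> omega
    have hbn : b ≤ n := hJle b hbJ
    refine ⟨a, by omega, ?_, ?_⟩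
    · intro haT
      have hai := hT haT
      simp only [Finset.mem_Icc] at hai
      simp only [hJ, STn, Finset.mem_insert, Finset.mem_sdiff, Finset.mem_Icc] at haJ
      rcases haJ with h|h|h
      · omega
      · omega
      · exact h.2 haT
    · intro j hj
      simp only [Finset.mem_Icc] at hj
      have hjJ : j ∉ J := by
        intro hjJ
        have hjF : j ∈ J.filter (fun b => a < b) :=
          Finset.mem_filter.mpr ⟨hjJ, by omega⟩
        have hle := Finset.min_le hjF
        rw [hmin] at hle
        have : b ≤ j := WithTop.coe_le_coe.mp hle
        omega
      by_contra hjT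
      apply hjJ
      simp only [hJ, STn, Finset.mem_insert, Finset.mem_sdiff, Finset.mem_Icc]
      right; right
      exact ⟨⟨by omega, by omega⟩, hjT⟩

lemma cardA (n N k i : ℕ) (hk1 : 1 ≤ k) :
    (((Finset.Icc 1 (n-1)).powersetCard N).filter
      (fun T => i ∉ T ∧ Finset.Icc (i+1) (i+k-1) ⊆ T)).card
      ≤ ((((Finset.Icc 1 (n-1)).erase i) \ Finset.Icc (i+1) (i+k-1)).card).choose (N - (k-1)) := by
  set s := Finset.Icc (i+1) (i+k-1) with hs
  set u := ((Finset.Icc 1 (n-1)).erase i) \ s with hu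
  rw [← Finset.card_powersetCard]
  apply Finset.card_le_card_of_injOn (fun T => T \ s)
  · intro T hT
    simp only [Finset.mem_coe, Finset.mem_filter, Finset.mem_powersetCard] at hT
    obtain ⟨⟨hTsub, hTcard⟩, hiT, hsT⟩ := hT
    rw [Finset.mem_coe, Finset.mem_powersetCard]
    constructor
    · intro x hx
      rw [Finset.mem_sdiff] at hx
      rw [hu, Finset.mem_sdiff, Finset.mem_erase]
      refine ⟨⟨?_, hTsub hx.1⟩, hx.2⟩
      rintro rfl; exact hiT hx.1
    · rw [Finset.card_sdiff_of_subset hsT, hTcard, Nat.card_Icc]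
      congr 1
      omega
  · intro T1 h1 T2 h2 heq
    simp only [Finset.coe_filter, Set.mem_setOf_eq, Finset.mem_powersetCard] at h1 h2
    have e1 := Finset.sdiff_union_of_subset h1.2.2
    have e2 := Finset.sdiff_union_of_subset h2.2.2
    rw [← e1, ← e2]
    simp only at heq
    rw [heq]

lemma chooseBound (N : ℕ) (hN : 4 ≤ N) : ∀ k, 1 ≤ k → k ≤ N →
    (((2*N-1-k).choose (N+1-k)) : ℝ) ≤ (2/3)^(k-1) * (((2*N-2).choose N) : ℝ) := by
  intro k
  induction k with
  | zero => omega
  | succ k ih =>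
    intro _ hkN
    rcases Nat.eq_zero_or_pos k with rfl | hk1
    · have e1 : 2*N-1-1 = 2*N-2 := by omega
      have e2 : N+1-1 = N := by omega
      rw [e1, e2]
      simp
    · have ihk := ih hk1 (by omega)
      have hid : (2*N-1-k) * (2*N-2-k).choose (N-k) = (2*N-1-k).choose (N+1-k) * (N+1-k) := by
        have h := Nat.add_one_mul_choose_eq (2*N-2-k) (N-k)
        have e1 : (2*N-2-k) + 1 = 2*N-1-k := by omega
        have e2 : (N-k) + 1 = N+1-k := by omega
        rw [e1, e2] at h
        exact h
      have hnat : 3 * (2*N-2-k).choose (N-k) ≤ 2 * (2*N-1-k).choose (N+1-k) := by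
        have h3 : 3*(N+1-k) ≤ 2*(2*N-1-k) := by omega
        have hpos : 0 < 2*N-1-k := by omega
        have : (2*N-1-k) * (3 * (2*N-2-k).choose (N-k))
            ≤ (2*N-1-k) * (2 * (2*N-1-k).choose (N+1-k)) := by
          calc (2*N-1-k) * (3 * (2*N-2-k).choose (N-k))
              = 3 * ((2*N-1-k) * (2*N-2-k).choose (N-k)) := by ring
            _ = 3 * ((2*N-1-k).choose (N+1-k) * (N+1-k)) := by rw [hid]
            _ = (3*(N+1-k)) * (2*N-1-k).choose (N+1-k) := by ring
            _ ≤ (2*(2*N-1-k)) * (2*N-1-k).choose (N+1-k) :=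
                Nat.mul_le_mul_right _ h3
            _ = (2*N-1-k) * (2 * (2*N-1-k).choose (N+1-k)) := by ring
        exact Nat.le_of_mul_le_mul_left this hpos
      have hreal : ((2*N-2-k).choose (N-k) : ℝ) ≤ (2/3) * ((2*N-1-k).choose (N+1-k) : ℝ) := by
        have := (Nat.cast_le (α := ℝ)).mpr hnat
        push_cast at this
        linarith
      have e1 : 2*N-1-(k+1) = 2*N-2-k := by omega
      have e2 : N+1-(k+1) = N-k := by omega
      have e3 : k+1-1 = k := by omega
      rw [e1, e2, e3]
      calc ((2*N-2-k).choose (N-k) : ℝ)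
          ≤ (2/3) * ((2*N-1-k).choose (N+1-k) : ℝ) := hreal
        _ ≤ (2/3) * ((2/3)^(k-1) * ((2*N-2).choose N : ℝ)) := by linarith
        _ = (2/3)^(k-1+1) * ((2*N-2).choose N : ℝ) := by ring
        _ = (2/3)^k * ((2*N-2).choose N : ℝ) := by rw [Nat.sub_add_cancel hk1]


/-- Upper tail bound of Lemma `bigMEI`: for odd `n ≥ 7`, `N = (n+1)/2`, and
`k ∈ {1,…,N}`, the number of `N`-element subsets `T` of `{1,…,n-1}` with
`mei(S_T) ≥ k` is at most `n·(2/3)^k·C(n-1, N)`. -/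
theorem stmt11 (n N : ℕ) (hn : 7 ≤ n) (hodd : Odd n) (hN : N = (n + 1) / 2)
    (k : ℕ) (hk1 : 1 ≤ k) (hkN : k ≤ N) :
    (((((Finset.Icc 1 (n - 1)).powersetCard N).filter
        (fun T => k ≤ mei (STn n T))).card : ℝ))
      ≤ (n : ℝ) * (2 / 3 : ℝ) ^ k * ((n - 1).choose N : ℝ) := by
  obtain ⟨m, hm⟩ := hodd
  have hn2 : n = 2*N - 1 := by omega
  have hN4 : 4 ≤ N := by omega
  set P := (Finset.Icc 1 (n-1)).powersetCard N with hP
  set A : ℕ → Finset (Finset ℕ) :=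
    fun i => P.filter (fun T => i ∉ T ∧ Finset.Icc (i+1) (i+k-1) ⊆ T) with hA
  -- Step 1: union bound
  have hsub : P.filter (fun T => k ≤ mei (STn n T)) ⊆ (Finset.range (n-k+1)).biUnion A := by
    intro T hT
    rw [Finset.mem_filter] at hT
    obtain ⟨hTP, hTk⟩ := hT
    have hTsub : T ⊆ Finset.Icc 1 (n-1) := (Finset.mem_powersetCard.mp hTP).1
    obtain ⟨i, hile, hiT, hsT⟩ := extract n k hk1 T hTsub hTk
    rw [Finset.mem_biUnion]
    exact ⟨i, Finset.mem_range.mpr (by omega), Finset.mem_filter.mpr ⟨hTP, hiT, hsT⟩⟩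
  -- Step 2: per-position bounds
  have hA0 : (A 0).card ≤ (n-k).choose (N-(k-1)) := by
    refine le_trans (cardA n N k 0 hk1) (Nat.choose_le_choose _ ?_)
    have he : (Finset.Icc 1 (n-1)).erase 0 = Finset.Icc 1 (n-1) := by
      apply Finset.erase_eq_of_notMem
      simp
    rw [he, Finset.card_sdiff_of_subset (by
      intro x hx
      simp only [Finset.mem_Icc] at hx ⊢
      omega)]
    simp only [Nat.card_Icc]
    omega
  have hAi : ∀ i, 1 ≤ i → i ≤ n - k → (A i).card ≤ (n-k-1).choose (N-(k-1)) := by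
    intro i hi1 hi2
    refine le_trans (cardA n N k i hk1) (Nat.choose_le_choose _ ?_)
    have hsube : Finset.Icc (i+1) (i+k-1) ⊆ (Finset.Icc 1 (n-1)).erase i := by
      intro x hx
      simp only [Finset.mem_Icc] at hx
      simp only [Finset.mem_erase, Finset.mem_Icc]
      omega
    rw [Finset.card_sdiff_of_subset hsube,
        Finset.card_erase_of_mem (by simp only [Finset.mem_Icc]; omega)]
    simp only [Nat.card_Icc]
    omega
  -- Step 3: total nat bound
  have hcard : (P.filter (fun T => k ≤ mei (STn n T))).card
      ≤ (N-1) * (n-k).choose (N-(k-1)) := by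
    calc (P.filter (fun T => k ≤ mei (STn n T))).card
        ≤ ((Finset.range (n-k+1)).biUnion A).card := Finset.card_le_card hsub
      _ ≤ ∑ i ∈ Finset.range (n-k+1), (A i).card := Finset.card_biUnion_le
      _ ≤ ∑ i ∈ Finset.range (n-k), (A (i+1)).card + (A 0).card := by
          rw [Finset.sum_range_succ']
      _ ≤ ∑ _i ∈ Finset.range (n-k), (n-k-1).choose (N-(k-1)) + (n-k).choose (N-(k-1)) := by
          gcongr with i hi
          exact hAi (i+1) (by omega) (by simp only [Finset.mem_range] at hi; omega)
      _ = (n-k) * (n-k-1).choose (N-(k-1)) + (n-k).choose (N-(k-1)) := by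
          rw [Finset.sum_const, Finset.card_range, smul_eq_mul]
      _ = (N-1) * (n-k).choose (N-(k-1)) := by
          have hid := Nat.choose_mul_succ_eq (n-k-1) (N-(k-1))
          have e1 : n-k-1+1 = n-k := by omega
          rw [e1] at hid
          have e2 : n-k-(N-(k-1)) = N-2 := by omega
          rw [e2] at hid
          have e3 : N-1 = N-2+1 := by omega
          calc (n-k) * (n-k-1).choose (N-(k-1)) + (n-k).choose (N-(k-1))
              = (n-k-1).choose (N-(k-1)) * (n-k) + (n-k).choose (N-(k-1)) := by ring
            _ = (n-k).choose (N-(k-1)) * (N-2) + (n-k).choose (N-(k-1)) := by rw [hid]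
            _ = (N-2+1) * (n-k).choose (N-(k-1)) := by ring
            _ = (N-1) * (n-k).choose (N-(k-1)) := by rw [← e3]
  -- Step 4: go to ℝ
  have hcb := chooseBound N hN4 k hk1 hkN
  have e4 : n-k = 2*N-1-k := by omega
  have e5 : N-(k-1) = N+1-k := by omega
  have e6 : n-1 = 2*N-2 := by omega
  rw [e4, e5] at hcard
  rw [e6]
  have hcardR : ((P.filter (fun T => k ≤ mei (STn n T))).card : ℝ)
      ≤ ((N-1 : ℕ) : ℝ) * ((2*N-1-k).choose (N+1-k) : ℝ) := by
    exact_mod_cast hcard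
  have hNn : ((N-1 : ℕ) : ℝ) ≤ (2/3) * (n : ℝ) := by
    have : 3 * (N-1) ≤ 2 * n := by omega
    have := (Nat.cast_le (α := ℝ)).mpr this
    push_cast at this
    linarith
  have hpowpos : (0:ℝ) < (2/3 : ℝ)^(k-1) := by positivity
  have hCpos : (0:ℝ) ≤ ((2*N-2).choose N : ℝ) := Nat.cast_nonneg _
  have hpk : (2/3 : ℝ)^k = (2/3 : ℝ)^(k-1) * (2/3) := by
    rw [← pow_succ, Nat.sub_add_cancel hk1]
  calc ((P.filter (fun T => k ≤ mei (STn n T))).card : ℝ)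
      ≤ ((N-1 : ℕ) : ℝ) * ((2*N-1-k).choose (N+1-k) : ℝ) := hcardR
    _ ≤ ((N-1 : ℕ) : ℝ) * ((2/3)^(k-1) * ((2*N-2).choose N : ℝ)) := by
        have hnn : (0:ℝ) ≤ ((N-1 : ℕ) : ℝ) := Nat.cast_nonneg _
        exact mul_le_mul_of_nonneg_left hcb hnn
    _ ≤ ((2/3) * (n : ℝ)) * ((2/3)^(k-1) * ((2*N-2).choose N : ℝ)) := by
        have : (0:ℝ) ≤ (2/3)^(k-1) * ((2*N-2).choose N : ℝ) := by positivity
        exact mul_le_mul_of_nonneg_right hNn this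
    _ = (n : ℝ) * ((2/3)^(k-1) * (2/3)) * ((2*N-2).choose N : ℝ) := by ring
    _ = (n : ℝ) * (2/3)^k * ((2*N-2).choose N : ℝ) := by rw [← hpk]
end

section
/- There exists n₀ ∈ ℕ such that for every odd n ≥ n₀, with N = (n+1)/2 and k = ⌊(ln n)/3⌋, the number of N-element subsets T of {1, …, n−1} such that mei(S_T) ≥ k, where S_T := {0, n} ∪ ({1,…,n−1} \ T), is at least (1 − exp(−n^{1−(ln 4)/3}/ln n) − exp(−n/6)) · C(n−1, N). Equivalently, for a uniformly random N-subset T, with probability at least 1 − exp(−n^{1−(ln 4)/3}/ln n) − exp(−n/6) the set S_T leaves an empty interval of length at least ⌊(ln n)/3⌋ on the Pareto front. (Lower bound of Lemma bigMEI: with probability 1 − exp(−Ω(n^{1/2})), mei(P_{t+1}) ≥ ⌊(ln n)/3⌋.) -/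
lemma mem_STn {n : ℕ} {T : Finset ℕ} {x : ℕ} :
    x ∈ STn n T ↔ x = 0 ∨ x = n ∨ (1 ≤ x ∧ x ≤ n - 1 ∧ x ∉ T) := by
  simp [STn, Finset.mem_insert, Finset.mem_sdiff, and_assoc]

lemma gap_of_block {n a l : ℕ} {T : Finset ℕ} (ha : 1 ≤ a) (hl : 0 < l)
    (hab : a + l ≤ n) (hsub : Finset.Icc a (a + l - 1) ⊆ T) :
    l + 1 ≤ mei (STn n T) := by
  classical
  set J := STn n T with hJ
  have h0 : (0 : ℕ) ∈ J := by simp [hJ, STn]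
  have hn : n ∈ J := by simp [hJ, STn]
  -- p : largest element of J below a
  have hPne : (J.filter (fun x => x < a)).Nonempty := ⟨0, by simp only [Finset.mem_filter]; exact ⟨h0, by omega⟩⟩
  set p := (J.filter (fun x => x < a)).max' hPne with hp
  have hpmem := (J.filter (fun x => x < a)).max'_mem hPne
  have hpJ : p ∈ J := (Finset.mem_filter.mp hpmem).1
  have hpa : p < a := (Finset.mem_filter.mp hpmem).2
  have hpmax : ∀ x ∈ J, x < a → x ≤ p := fun x hx hxa =>
    Finset.le_max' _ x (by simp only [Finset.mem_filter]; exact ⟨hx, hxa⟩)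
  -- the next element after p
  have hnf : n ∈ J.filter (fun b => p < b) := by
    refine Finset.mem_filter.mpr ⟨hn, ?_⟩
    omega
  have hfne : (J.filter (fun b => p < b)).Nonempty := ⟨n, hnf⟩
  obtain ⟨c, hc⟩ := Finset.min_of_nonempty hfne
  have hcmem : c ∈ J.filter (fun b => p < b) := Finset.mem_of_min hc
  have hcJ : c ∈ J := (Finset.mem_filter.mp hcmem).1
  have hpc : p < c := (Finset.mem_filter.mp hcmem).2
  -- c is at least a + l
  have hcge : a + l ≤ c := by
    by_contra hlt
    push_neg at hlt
    have hca : ¬ c < a := fun h => absurd (hpmax c hcJ h) (by omega)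
    push_neg at hca
    -- so a ≤ c ≤ a + l - 1, hence c ∈ T, contradiction with c ∈ J
    have hcT : c ∈ T := hsub (Finset.mem_Icc.mpr ⟨hca, by omega⟩)
    rcases mem_STn.mp hcJ with h | h | h
    · omega
    · omega
    · exact h.2.2 hcT
  have hgap : gapAfter J p = c - p := by
    rw [gapAfter, hc]
    rfl
  have : l + 1 ≤ gapAfter J p := by
    rw [hgap]; omega
  calc l + 1 ≤ gapAfter J p := this
    _ ≤ mei J := Finset.le_sup hpJ

open Finset in
lemma card_split (s t : Finset ℕ) (p q : Finset ℕ → Prop) [DecidablePred p] [DecidablePred q]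
    (cond : Finset ℕ → Prop) [DecidablePred cond]
    (h : ∀ T ⊆ s ∪ t, cond T → p (T ∩ s) ∧ q (T ∩ t)) :
    ((s ∪ t).powerset.filter cond).card ≤
      (s.powerset.filter p).card * (t.powerset.filter q).card := by
  classical
  rw [← Finset.card_product]
  apply Finset.card_le_card_of_injOn (fun T => (T ∩ s, T ∩ t))
  · intro T hT
    simp only [Finset.mem_coe, Finset.mem_filter, Finset.mem_powerset] at hT
    obtain ⟨hTsub, hTc⟩ := hT
    obtain ⟨hp, hq⟩ := h T hTsub hTc
    simp only [Finset.mem_coe, Finset.mem_product, Finset.mem_filter, Finset.mem_powerset]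
    exact ⟨⟨Finset.inter_subset_right, hp⟩, ⟨Finset.inter_subset_right, hq⟩⟩
  · intro T₁ h₁ T₂ h₂ heq
    simp only [Finset.mem_coe, Finset.mem_filter, Finset.mem_powerset] at h₁ h₂
    have e1 : T₁ ∩ s = T₂ ∩ s := congrArg Prod.fst heq
    have e2 : T₁ ∩ t = T₂ ∩ t := congrArg Prod.snd heq
    have : T₁ ∩ (s ∪ t) = T₂ ∩ (s ∪ t) := by
      rw [Finset.inter_union_distrib_left, Finset.inter_union_distrib_left, e1, e2]
    rwa [Finset.inter_eq_left.mpr h₁.1, Finset.inter_eq_left.mpr h₂.1] at this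

lemma card_not_self (B : Finset ℕ) :
    (B.powerset.filter (fun V => ¬ B ⊆ V)).card = 2 ^ B.card - 1 := by
  classical
  have : B.powerset.filter (fun V => ¬ B ⊆ V) = B.powerset.erase B := by
    ext V
    simp only [Finset.mem_filter, Finset.mem_powerset, Finset.mem_erase]
    constructor
    · rintro ⟨h1, h2⟩
      exact ⟨fun e => h2 (e ▸ Finset.Subset.refl B), h1⟩
    · rintro ⟨h1, h2⟩
      exact ⟨h2, fun h => h1 (Finset.Subset.antisymm h2 h)⟩
  rw [this, Finset.card_erase_of_mem (Finset.mem_powerset_self B), Finset.card_powerset]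

lemma card_avoid (l : ℕ) :
    ∀ (bs : List (Finset ℕ)) (u : Finset ℕ),
      (∀ B ∈ bs, B ⊆ u) → (∀ B ∈ bs, B.card = l) → bs.Pairwise Disjoint →
      ((u.powerset.filter (fun T => ∀ B ∈ bs, ¬ B ⊆ T)).card : ℕ) ≤
        (2 ^ l - 1) ^ bs.length * 2 ^ (u.card - bs.length * l) := by
  classical
  intro bs
  induction bs with
  | nil =>
    intro u _ _ _
    simp only [List.not_mem_nil, false_implies, implies_true, Finset.filter_true_of_mem,
      fun _ _ => trivial]
    simp [Finset.card_powerset]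
  | cons B rest ih =>
    intro u hsub hcard hpw
    have hBu : B ⊆ u := hsub B (by simp)
    have hBl : B.card = l := hcard B (by simp)
    have hu : u = B ∪ (u \ B) := by
      rw [Finset.union_sdiff_of_subset hBu]
    have key : ((u.powerset.filter (fun T => ∀ B' ∈ B :: rest, ¬ B' ⊆ T)).card : ℕ) ≤
        (B.powerset.filter (fun V => ¬ B ⊆ V)).card *
        ((u \ B).powerset.filter (fun W => ∀ B' ∈ rest, ¬ B' ⊆ W)).card := by
      have hcs := card_split B (u \ B) (fun V => ¬ B ⊆ V)
        (fun W => ∀ B' ∈ rest, ¬ B' ⊆ W) (fun T => ∀ B' ∈ B :: rest, ¬ B' ⊆ T) ?_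
      · rwa [Finset.union_sdiff_of_subset hBu] at hcs
      intro T hT hc
      constructor
      · intro hBT
        exact (hc B (by simp)) (fun x hx => (Finset.mem_inter.mp (hBT hx)).1)
      · intro B' hB' hB'T
        exact (hc B' (by simp [hB'])) (fun x hx => (Finset.mem_inter.mp (hB'T hx)).1)
    have hdisjB : ∀ B' ∈ rest, Disjoint B B' := (List.pairwise_cons.mp hpw).1
    have ih' := ih (u \ B)
      (fun B' hB' => by
        intro x hx
        refine Finset.mem_sdiff.mpr ⟨hsub B' (by simp [hB']) hx, ?_⟩
        exact fun hxB => Finset.disjoint_left.mp (hdisjB B' hB') hxB hx)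
      (fun B' hB' => hcard B' (by simp [hB']))
      ((List.pairwise_cons.mp hpw).2)
    calc ((u.powerset.filter (fun T => ∀ B' ∈ B :: rest, ¬ B' ⊆ T)).card : ℕ)
        ≤ _ := key
      _ ≤ (2 ^ l - 1) * ((2 ^ l - 1) ^ rest.length * 2 ^ ((u \ B).card - rest.length * l)) := by
          rw [card_not_self, hBl]
          exact Nat.mul_le_mul_left _ ih'
      _ = (2 ^ l - 1) ^ (B :: rest).length * 2 ^ (u.card - (B :: rest).length * l) := by
          have he : u.card - l - rest.length * l = u.card - (rest.length + 1) * l := by rw [Nat.sub_sub, add_one_mul, Nat.add_comm]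
          rw [Finset.card_sdiff_of_subset hBu, hBl, List.length_cons, ← mul_assoc, ← pow_succ', he]

lemma log_two_lt : Real.log 2 < 0.75 := lt_trans Real.log_two_lt_d9 (by norm_num)
lemma log_four_gt : (0.75:ℝ) < Real.log 4 := by
  have h4 : (4:ℝ) = 2 ^ (2:ℕ) := by norm_num
  rw [h4, Real.log_pow]
  have := Real.log_two_gt_d9
  push_cast
  linarith

lemma analytic (x : ℝ) (hx : (1000000:ℝ) ≤ x) (l m : ℕ) (hl1 : 1 ≤ l)
    (hl : (l:ℝ) ≤ Real.log x / 3) (hm : (x - 1)/(l:ℝ) - 1 ≤ (m:ℝ)) :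
    Real.log x + x ^ ((1:ℝ) - Real.log 4 / 3) / Real.log x ≤ (m:ℝ) * ((2:ℝ)^l)⁻¹ := by
  have hx0 : (0:ℝ) < x := by linarith
  have hx1 : (1:ℝ) ≤ x := by linarith
  have hlog13 : (13:ℝ) ≤ Real.log x := by
    rw [Real.le_log_iff_exp_le hx0]
    calc Real.exp 13 = Real.exp 1 ^ (13:ℕ) := by
          rw [← Real.exp_nat_mul]; norm_num
      _ ≤ 2.7182818286 ^ (13:ℕ) :=
          pow_le_pow_left₀ (Real.exp_pos 1).le Real.exp_one_lt_d9.le 13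
      _ ≤ 1000000 := by norm_num
      _ ≤ x := hx
  have hlogpos : (0:ℝ) < Real.log x := by linarith
  have hsqrt : (1000:ℝ) ≤ Real.sqrt x := by
    have : Real.sqrt 1000000 ≤ Real.sqrt x := Real.sqrt_le_sqrt hx
    rwa [show (1000000:ℝ) = 1000^2 by norm_num, Real.sqrt_sq (by norm_num)] at this
  have hsq : Real.sqrt x ^ 2 = x := Real.sq_sqrt hx0.le
  -- log x ≤ 2 √x
  have hlog_sqrt : Real.log x ≤ 2 * Real.sqrt x := by
    have h := Real.log_le_rpow_div hx0.le (show (0:ℝ) < 1/2 by norm_num)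
    rw [← Real.sqrt_eq_rpow] at h
    linarith [h, Real.sqrt_nonneg x]
  -- log x ≤ 8 x^{1/8}
  have hlog8 : Real.log x ≤ 8 * x ^ (1/8 : ℝ) := by
    have h := Real.log_le_rpow_div hx0.le (show (0:ℝ) < 1/8 by norm_num)
    have e : x ^ (1/8:ℝ) / (1/8) = 8 * x ^ (1/8:ℝ) := by ring
    linarith [e ▸ h]
  -- (log x)^2 ≤ x^{3/4}
  have hlogsq : Real.log x ^ 2 ≤ x ^ (3/4 : ℝ) := by
    have h1 : Real.log x ^ 2 ≤ (8 * x ^ (1/8:ℝ)) ^ 2 := by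
      apply pow_le_pow_left₀ hlogpos.le hlog8
    have h2 : (8 * x ^ (1/8:ℝ)) ^ 2 = 64 * x ^ (1/4:ℝ) := by
      rw [mul_pow, ← Real.rpow_natCast (x ^ (1/8:ℝ)) 2, ← Real.rpow_mul hx0.le]
      norm_num
    have h3 : (64:ℝ) * x ^ (1/4:ℝ) ≤ x ^ (3/4:ℝ) := by
      have e : x ^ (3/4:ℝ) = x ^ (1/4:ℝ) * x ^ (1/2:ℝ) := by
        rw [← Real.rpow_add hx0]; norm_num
      have hhalf : (64:ℝ) ≤ x ^ (1/2:ℝ) := by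
        rw [← Real.sqrt_eq_rpow]; linarith
      rw [e, mul_comm (64:ℝ)]
      exact mul_le_mul_of_nonneg_left hhalf (Real.rpow_nonneg hx0.le _)
    linarith
  -- 2^l ≤ x^{log 2 / 3}
  have hq : ((2:ℝ)^l) ≤ x ^ (Real.log 2 / 3 : ℝ) := by
    have e1 : ((2:ℝ)^l) = Real.exp ((l:ℝ) * Real.log 2) := by
      rw [Real.exp_nat_mul, Real.exp_log (by norm_num : (0:ℝ) < 2)]
    have e2 : x ^ (Real.log 2 / 3 : ℝ) = Real.exp (Real.log x * (Real.log 2 / 3)) := by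
      rw [Real.rpow_def_of_pos hx0]
    rw [e1, e2]
    apply Real.exp_le_exp.mpr
    have hl2 : (0:ℝ) ≤ Real.log 2 := Real.log_nonneg (by norm_num)
    calc (l:ℝ) * Real.log 2 ≤ (Real.log x / 3) * Real.log 2 :=
          mul_le_mul_of_nonneg_right hl hl2
      _ = Real.log x * (Real.log 2 / 3) := by ring
  -- m ≥ 2x / log x
  have hmlb : 2 * x / Real.log x ≤ (m:ℝ) := by
    have hlpos : (0:ℝ) < (l:ℝ) := by exact_mod_cast hl1
    have h1 : 3 * (x - 1) / Real.log x ≤ (x - 1) / (l:ℝ) := by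
      rw [div_le_div_iff₀ hlogpos hlpos]
      have : (l:ℝ) * 3 ≤ Real.log x := by linarith
      nlinarith [hx1]
    have h2 : 2 * x / Real.log x ≤ 3 * (x - 1) / Real.log x - 1 := by
      have hx3 : Real.log x ≤ x - 3 := by nlinarith [hsqrt, hsq, hlog_sqrt]
      have e : 3 * (x - 1) / Real.log x - 1 = (3 * (x - 1) - Real.log x) / Real.log x := by
        field_simp
      rw [e, div_le_div_iff₀ hlogpos hlogpos]
      nlinarith [hlogpos]
    linarith
  -- x^{1 - log2/3} ≥ x^{3/4}
  have hexp1 : x ^ (3/4:ℝ) ≤ x ^ ((1:ℝ) - Real.log 2 / 3) := by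
    apply Real.rpow_le_rpow_of_exponent_le hx1
    have := log_two_lt
    linarith
  -- key: m * 2^{-l} ≥ 2 x^{3/4} / log x
  have hkey : 2 * x ^ (3/4:ℝ) / Real.log x ≤ (m:ℝ) * ((2:ℝ)^l)⁻¹ := by
    have hp : (0:ℝ) < (2:ℝ)^l := by positivity
    have hxr : (0:ℝ) < x ^ (Real.log 2 / 3 : ℝ) := Real.rpow_pos_of_pos hx0 _
    have hqinv : (x ^ (Real.log 2 / 3 : ℝ))⁻¹ ≤ ((2:ℝ)^l)⁻¹ :=
      inv_anti₀ hp hq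
    have hm0 : (0:ℝ) ≤ (m:ℝ) := by positivity
    calc 2 * x ^ (3/4:ℝ) / Real.log x
        ≤ (2 * x / Real.log x) * (x ^ (Real.log 2 / 3 : ℝ))⁻¹ := by
          rw [div_mul_eq_mul_div, div_le_div_iff₀ hlogpos hlogpos]
          have e : 2 * x * (x ^ (Real.log 2 / 3:ℝ))⁻¹ = 2 * (x ^ ((1:ℝ) - Real.log 2/3)) := by
            have e2 : x ^ ((1:ℝ) - Real.log 2/3) = x ^ (1:ℝ) * x ^ (-(Real.log 2/3)) := by
              rw [← Real.rpow_add hx0]; ring_nf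
            rw [e2, Real.rpow_one, ← Real.rpow_neg hx0.le]
            ring
          rw [e]
          have := hexp1
          nlinarith [hlogpos]
        _ ≤ (m:ℝ) * ((2:ℝ)^l)⁻¹ := by
          apply mul_le_mul hmlb hqinv (by positivity) hm0
  -- LHS pieces
  have hA : x ^ ((1:ℝ) - Real.log 4 / 3) / Real.log x ≤ x ^ (3/4:ℝ) / Real.log x := by
    gcongr
    · have := log_four_gt
      linarith
  have hB : Real.log x ≤ x ^ (3/4:ℝ) / Real.log x := by
    rw [le_div_iff₀ hlogpos]
    nlinarith [hlogsq]
  calc Real.log x + x ^ ((1:ℝ) - Real.log 4 / 3) / Real.log x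
      ≤ x ^ (3/4:ℝ) / Real.log x + x ^ (3/4:ℝ) / Real.log x := add_le_add hB hA
    _ = 2 * x ^ (3/4:ℝ) / Real.log x := by ring
    _ ≤ (m:ℝ) * ((2:ℝ)^l)⁻¹ := hkey

lemma two_pow_le_choose (m : ℕ) (hm : 4 ≤ m) :
    2 ^ (2 * m) ≤ (2 * m) * (2 * m).choose (m + 1) := by
  have h1 : 4 ^ m < m * Nat.centralBinom m := Nat.four_pow_lt_mul_centralBinom m hm
  have h2 : (2 * m).choose (m + 1) * (m + 1) = Nat.centralBinom m * m := by
    rw [Nat.centralBinom, Nat.choose_succ_right_eq (2 * m) m, Nat.two_mul, Nat.add_sub_cancel]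
  have h3 : Nat.centralBinom m * m ≤ (2 * m).choose (m + 1) * (2 * m) := by
    rw [← h2]
    exact Nat.mul_le_mul_left _ (by omega)
  have h4 : (4:ℕ) ^ m = 2 ^ (2 * m) := by
    rw [pow_mul]; norm_num
  calc 2 ^ (2 * m) = 4 ^ m := h4.symm
    _ ≤ m * Nat.centralBinom m := h1.le
    _ = Nat.centralBinom m * m := by ring
    _ ≤ (2 * m).choose (m + 1) * (2 * m) := h3
    _ = (2 * m) * (2 * m).choose (m + 1) := by ring

lemma log_ge_13 {x : ℝ} (hx : (1000000:ℝ) ≤ x) : 13 ≤ Real.log x := by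
  have hx0 : (0:ℝ) < x := by linarith
  rw [Real.le_log_iff_exp_le hx0]
  calc Real.exp 13 = Real.exp 1 ^ (13:ℕ) := by
        rw [← Real.exp_nat_mul]; norm_num
    _ ≤ 2.7182818286 ^ (13:ℕ) :=
        pow_le_pow_left₀ (Real.exp_pos 1).le Real.exp_one_lt_d9.le 13
    _ ≤ 1000000 := by norm_num
    _ ≤ x := hx

set_option maxHeartbeats 2000000 in
/-- Lower bound of Lemma `bigMEI`: for all sufficiently large odd `n`, with
`N = (n+1)/2` and `k = ⌊(ln n)/3⌋`, the number of `N`-element subsets `T` of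
`{1,…,n-1}` with `mei(S_T) ≥ k` is at least
`(1 - exp(-n^{1-(ln 4)/3}/ln n) - exp(-n/6))·C(n-1, N)`. -/
theorem stmt14 :
    ∃ n₀ : ℕ, ∀ n : ℕ, n₀ ≤ n → Odd n → ∀ N k : ℕ, N = (n + 1) / 2 →
      k = ⌊Real.log n / 3⌋₊ →
      (1 - Real.exp (-(n : ℝ) ^ ((1 : ℝ) - Real.log 4 / 3) / Real.log n)
          - Real.exp (-(n : ℝ) / 6)) * ((n - 1).choose N : ℝ)
        ≤ (((((Finset.Icc 1 (n - 1)).powersetCard N).filter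
            (fun T => k ≤ mei (STn n T))).card : ℝ)) := by
  classical
  use 1000000
  intro n hn hodd N k hN hk
  set x : ℝ := (n:ℝ) with hx
  have hxge : (1000000:ℝ) ≤ x := by rw [hx]; exact_mod_cast hn
  have hx0 : (0:ℝ) < x := by linarith
  have hx1 : (1:ℝ) ≤ x := by linarith
  have hlog13 : (13:ℝ) ≤ Real.log x := log_ge_13 hxge
  have hlogpos : (0:ℝ) < Real.log x := by linarith
  -- k ≥ 2
  have hk2 : 2 ≤ k := by
    rw [hk]
    have h2 : ((2:ℕ):ℝ) ≤ Real.log x / 3 := by push_cast; linarith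
    exact Nat.le_floor h2
  set L : ℕ := k - 1 with hL
  have hL1 : 1 ≤ L := by omega
  have hL0 : 0 < L := hL1
  have hkL : k = L + 1 := by omega
  set m : ℕ := (n - 1) / L with hm
  -- the blocks
  set bs : List (Finset ℕ) :=
    (List.range m).map (fun i => Finset.Icc (i * L + 1) (i * L + L)) with hbs
  have hmL : m * L ≤ n - 1 := Nat.div_mul_le_self _ _
  have hbs_sub : ∀ B ∈ bs, B ⊆ Finset.Icc 1 (n - 1) := by
    intro B hB
    rw [hbs, List.mem_map] at hB
    obtain ⟨i, hi, rfl⟩ := hB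
    rw [List.mem_range] at hi
    have hii : (i + 1) * L ≤ m * L := Nat.mul_le_mul_right _ (by omega)
    have h2 : (i + 1) * L = i * L + L := by ring
    apply Finset.Icc_subset_Icc (by omega) (by omega)
  have hbs_card : ∀ B ∈ bs, B.card = L := by
    intro B hB
    rw [hbs, List.mem_map] at hB
    obtain ⟨i, hi, rfl⟩ := hB
    rw [Nat.card_Icc]
    omega
  have hbs_pw : bs.Pairwise Disjoint := by
    rw [hbs]
    apply List.Pairwise.map
      (R := fun i j : ℕ => i < j)
    · intro i j hij
      apply Finset.disjoint_left.mpr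
      intro a ha ha'
      rw [Finset.mem_Icc] at ha ha'
      have h1 : (i + 1) * L ≤ j * L := Nat.mul_le_mul_right _ (by omega)
      have h2 : (i + 1) * L = i * L + L := by ring
      omega
    · exact List.pairwise_lt_range
  have hbs_len : bs.length = m := by
    rw [hbs, List.length_map, List.length_range]
  -- n = 2N - 1
  obtain ⟨j, hj⟩ := hodd
  have hN2 : n = 2 * N - 1 ∧ 5 ≤ N ∧ n - 1 = 2 * (N - 1) ∧ N = (N - 1) + 1 := by
    constructor
    · omega
    constructor
    · omega
    constructor
    · omega
    · omega
  -- the bad set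
  set bad := (((Finset.Icc 1 (n - 1)).powersetCard N).filter
      (fun T => ¬ k ≤ mei (STn n T))) with hbad
  set good := (((Finset.Icc 1 (n - 1)).powersetCard N).filter
      (fun T => k ≤ mei (STn n T))) with hgood
  have hIcc_card : (Finset.Icc 1 (n - 1)).card = n - 1 := by
    rw [Nat.card_Icc]; omega
  have hcard_split : good.card + bad.card = (n - 1).choose N := by
    rw [hgood, hbad, Finset.card_filter_add_card_filter_not,
      Finset.card_powersetCard, hIcc_card]
  -- bad ⊆ avoid set
  have hbad_sub : bad ⊆ (Finset.Icc 1 (n - 1)).powerset.filter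
      (fun T => ∀ B ∈ bs, ¬ B ⊆ T) := by
    intro T hT
    rw [hbad, Finset.mem_filter, Finset.mem_powersetCard] at hT
    obtain ⟨⟨hTsub, _⟩, hTbad⟩ := hT
    rw [Finset.mem_filter, Finset.mem_powerset]
    refine ⟨hTsub, ?_⟩
    intro B hB hBT
    apply hTbad
    rw [hbs, List.mem_map] at hB
    obtain ⟨i, hi, rfl⟩ := hB
    rw [List.mem_range] at hi
    have hii : (i + 1) * L ≤ m * L := Nat.mul_le_mul_right _ (by omega)
    have h2 : (i + 1) * L = i * L + L := by ring
    have := gap_of_block (n := n) (a := i * L + 1) (l := L) (T := T)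
      (by omega) hL0 (by omega) (by
        have : i * L + 1 + L - 1 = i * L + L := by omega
        rw [this]; exact hBT)
    omega
  have hbad_card : bad.card ≤ (2 ^ L - 1) ^ m * 2 ^ ((n - 1) - m * L) := by
    calc bad.card ≤ _ := Finset.card_le_card hbad_sub
      _ ≤ (2 ^ L - 1) ^ bs.length * 2 ^ ((Finset.Icc 1 (n-1)).card - bs.length * L) :=
          card_avoid L bs _ hbs_sub hbs_card hbs_pw
      _ = (2 ^ L - 1) ^ m * 2 ^ ((n - 1) - m * L) := by rw [hbs_len, hIcc_card]
  -- choose lower bound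
  have hchoose : (2:ℕ) ^ (n - 1) ≤ n * (n - 1).choose N := by
    have := two_pow_le_choose (N - 1) (by omega)
    have e1 : 2 * (N - 1) = n - 1 := by omega
    have e2 : (N - 1) + 1 = N := by omega
    rw [e1, e2] at this
    calc (2:ℕ) ^ (n - 1) ≤ (n - 1) * (n - 1).choose N := this
      _ ≤ n * (n - 1).choose N := Nat.mul_le_mul_right _ (by omega)
  -- real versions
  set q : ℝ := ((2:ℝ) ^ L)⁻¹ with hq
  have hq01 : 0 < q ∧ q ≤ 1 := by
    constructor
    · positivity
    · rw [hq]
      apply inv_le_one_of_one_le₀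
      exact one_le_pow₀ (by norm_num)
  -- analytic bound
  have hLR : (0:ℝ) < (L:ℝ) := by exact_mod_cast hL0
  have hxm : (x - 1) / (L:ℝ) - 1 ≤ (m:ℝ) := by
    have hmod := Nat.div_add_mod (n - 1) L
    have hmodlt := Nat.mod_lt (n - 1) hL0
    have hlt : n - 1 < (m + 1) * L := by
      have h2 : (m + 1) * L = m * L + L := by ring
      have h3 : L * ((n - 1) / L) = m * L := by rw [hm]; ring
      omega
    have hltR : (x - 1) < ((m:ℝ) + 1) * (L:ℝ) := by
      have hc : ((n - 1 : ℕ):ℝ) < (((m + 1) * L : ℕ):ℝ) := by exact_mod_cast hlt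
      have hxn1 : ((n - 1 : ℕ):ℝ) = x - 1 := by
        rw [hx, Nat.cast_sub (by omega : 1 ≤ n)]
        norm_num
      rw [hxn1] at hc
      push_cast at hc
      linarith
    have hdiv : (x - 1) / (L:ℝ) < (m:ℝ) + 1 := by
      rw [div_lt_iff₀ hLR]
      exact hltR
    linarith
  have hLle : (L:ℝ) ≤ Real.log x / 3 := by
    have hkle : (k:ℝ) ≤ Real.log x / 3 := by
      rw [hk]
      exact Nat.floor_le (by positivity)
    have hLk : (L:ℝ) ≤ (k:ℝ) := by exact_mod_cast Nat.sub_le k 1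
    linarith
  have hanalytic := analytic x hxge L m hL1 hLle hxm
  set A : ℝ := x ^ ((1:ℝ) - Real.log 4 / 3) / Real.log x with hA
  -- cast the bad card bound to ℝ
  have hcastbad : ((bad.card:ℝ)) ≤ (1 - q) ^ m * 2 ^ (n - 1) := by
    have h1 : ((bad.card:ℝ)) ≤ (((2 ^ L - 1) ^ m * 2 ^ ((n - 1) - m * L) : ℕ) : ℝ) := by
      exact_mod_cast hbad_card
    have h2 : (((2 ^ L - 1 : ℕ) : ℝ)) = (2:ℝ) ^ L * (1 - q) := by
      rw [Nat.cast_sub (Nat.one_le_two_pow)]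
      push_cast
      rw [hq]
      have hp : ((2:ℝ) ^ L) ≠ 0 := by positivity
      field_simp
    have h3 : (((2 ^ L - 1) ^ m * 2 ^ ((n - 1) - m * L) : ℕ) : ℝ)
        = (1 - q) ^ m * 2 ^ (n - 1) := by
      push_cast [h2]
      rw [mul_pow, ← pow_mul]
      have he : 2 ^ (m * L) * (2:ℝ) ^ (n - 1 - m * L) = 2 ^ (n - 1) := by
        rw [← pow_add]
        congr 1
        omega
      rw [Nat.mul_comm L m, mul_comm ((2:ℝ) ^ (m * L)) ((1 - q) ^ m), mul_assoc, he]
    rw [← h3]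
    exact h1
  have h1q : (1 - q) ^ m ≤ Real.exp (-(q * (m:ℝ))) := by
    calc (1 - q) ^ m ≤ (Real.exp (-q)) ^ m := by
          apply pow_le_pow_left₀ (by linarith [hq01.2])
          linarith [Real.add_one_le_exp (-q)]
      _ = Real.exp (-(q * (m:ℝ))) := by
          rw [← Real.exp_nat_mul]
          congr 1
          ring
  have hnle : x * Real.exp (-(q * (m:ℝ))) ≤ Real.exp (-A) := by
    have hlg : Real.log x ≤ q * (m:ℝ) - A := by
      have : (m:ℝ) * ((2:ℝ) ^ L)⁻¹ = q * (m:ℝ) := by rw [hq]; ring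
      linarith [this ▸ hanalytic]
    calc x * Real.exp (-(q * (m:ℝ)))
        = Real.exp (Real.log x) * Real.exp (-(q * (m:ℝ))) := by rw [Real.exp_log hx0]
      _ = Real.exp (Real.log x - q * (m:ℝ)) := by rw [← Real.exp_add]; ring_nf
      _ ≤ Real.exp (-A) := Real.exp_le_exp.mpr (by linarith)
  have h2nc : ((2:ℝ)) ^ (n - 1) ≤ x * ((n - 1).choose N : ℝ) := by
    rw [hx]
    exact_mod_cast hchoose
  have hC0 : (0:ℝ) ≤ ((n - 1).choose N : ℝ) := by positivity
  have hfinal : ((bad.card:ℝ)) ≤ Real.exp (-A) * ((n - 1).choose N : ℝ) := by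
    have hqm0 : (0:ℝ) ≤ Real.exp (-(q * (m:ℝ))) := (Real.exp_pos _).le
    calc ((bad.card:ℝ)) ≤ (1 - q) ^ m * 2 ^ (n - 1) := hcastbad
      _ ≤ Real.exp (-(q * (m:ℝ))) * 2 ^ (n - 1) := by
          apply mul_le_mul_of_nonneg_right h1q (by positivity)
      _ ≤ Real.exp (-(q * (m:ℝ))) * (x * ((n - 1).choose N : ℝ)) := by
          apply mul_le_mul_of_nonneg_left h2nc hqm0
      _ = (x * Real.exp (-(q * (m:ℝ)))) * ((n - 1).choose N : ℝ) := by ring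
      _ ≤ Real.exp (-A) * ((n - 1).choose N : ℝ) :=
          mul_le_mul_of_nonneg_right hnle hC0
  -- assemble
  have hgb : (good.card:ℝ) + (bad.card:ℝ) = ((n - 1).choose N : ℝ) := by
    exact_mod_cast hcard_split
  have hexp2 : (0:ℝ) ≤ Real.exp (-x / 6) * ((n - 1).choose N : ℝ) := by positivity
  have hAeq : Real.exp (-(n : ℝ) ^ ((1 : ℝ) - Real.log 4 / 3) / Real.log n)
      = Real.exp (-A) := by
    rw [hA, neg_div, hx]
  rw [hAeq]
  have : Real.exp (-(n:ℝ) / 6) = Real.exp (-x / 6) := by rw [hx]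
  rw [this]
  nlinarith [hfinal, hgb, hexp2, hC0]
end
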